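/- Let Φ : Q → Out(H) and S = {(α,β) ∈ Aut(H)×Aut(Q) : Φβ = c_{[α]}Φ}. If H, Aut_Φ(Q) = {β : Φβ = Φ}, and N_{Out(H)}(Φ(Q)) are all solvable, then S is solvable. Conversely, if S is solvable then H, Aut_Φ(Q), and the centralizer C_{Out(H)}(Φ(Q)) are solvable. -/

import Mathlib

/-- The group of inner automorphisms is normal in the automorphism group. -/
instance OutNormal (H : Type*) [Group H] : ((MulAut.conj : H →* MulAut H).range).Normal := by
  constructor
  intro n hn g
  obtain ⟨h, rfl⟩ := hn
  refine ⟨g h, ?_⟩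
  ext x
  simp [MulAut.conj, mul_assoc]

/-- The outer automorphism group `Out H = Aut H / Inn H`. -/
def OutGroup (H : Type*) [Group H] :=
  MulAut H ⧸ (MulAut.conj : H →* MulAut H).range

instance (H : Type*) [Group H] : Group (OutGroup H) :=
  QuotientGroup.Quotient.group _

/-- The projection `Aut H → Out H`, `α ↦ [α]`. -/
def toOut (H : Type*) [Group H] : MulAut H →* OutGroup H :=
  QuotientGroup.mk' _

/-- let `Φ : Q → Out H` and
`S = {(α,β) ∈ Aut H × Aut Q : Φβ = c_{[α]}Φ}`.  If `H`, `Aut_Φ Q = {β : Φβ = Φ}`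
and `N_{Out H}(Φ(Q))` are solvable then `S` is solvable; conversely, if `S` is
solvable then `H`, `Aut_Φ Q` and `C_{Out H}(Φ(Q))` are solvable. -/
theorem stmt18 {H Q : Type*} [Group H] [Group Q]
    (Φ : Q →* OutGroup H)
    (S : Subgroup (MulAut H × MulAut Q))
    (hS : ∀ p : MulAut H × MulAut Q,
      p ∈ S ↔ ∀ q : Q, Φ (p.2 q) = toOut H p.1 * Φ q * (toOut H p.1)⁻¹)
    (AΦ : Subgroup (MulAut Q))
    (hA : ∀ β : MulAut Q, β ∈ AΦ ↔ ∀ q : Q, Φ (β q) = Φ q) :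
    (IsSolvable H → IsSolvable ↥AΦ → IsSolvable ↥(Subgroup.normalizer (Φ.range : Set (OutGroup H))) →
      IsSolvable ↥S) ∧
    (IsSolvable ↥S →
      IsSolvable H ∧ IsSolvable ↥AΦ ∧
        IsSolvable ↥(Subgroup.centralizer (Φ.range : Set (OutGroup H)))) := by
  constructor
  · intro h1 h2 h3
    haveI : Group.IsSolvable H := h1
    haveI : Group.IsSolvable ↥AΦ := h2
    haveI : Group.IsSolvable ↥(Subgroup.normalizer (Φ.range : Set (OutGroup H))) := h3
    -- g : S →* normalizer
    have hgmem : ∀ p : ↥S, toOut H (p : MulAut H × MulAut Q).1 ∈ Subgroup.normalizer (Φ.range : Set (OutGroup H)) := by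
      rintro ⟨⟨α, β⟩, hp⟩
      show toOut H α ∈ Subgroup.normalizer (Φ.range : Set (OutGroup H))
      rw [Subgroup.mem_normalizer_iff]
      intro x
      constructor
      · rintro ⟨q, rfl⟩
        refine ⟨β q, ?_⟩
        have h0 := (hS (α, β)).mp hp q
        simpa using h0
      · rintro ⟨q, hq⟩
        refine ⟨β⁻¹ q, ?_⟩
        have h1 := (hS (α, β)).mp hp (β⁻¹ q)
        simp only [MulAut.apply_inv_self] at h1
        have h2 : Φ (β⁻¹ q) = (toOut H α)⁻¹ * Φ q * toOut H α := by
          rw [h1]; group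
        rw [h2, hq]; group
    let g : ↥S →* ↥(Subgroup.normalizer (Φ.range : Set (OutGroup H))) :=
      MonoidHom.codRestrict ((toOut H).comp ((MonoidHom.fst _ _).comp S.subtype))
        (Subgroup.normalizer (Φ.range : Set (OutGroup H))) hgmem
    have hfmem : ∀ p : H × ↥AΦ, (MulAut.conj p.1, (p.2 : MulAut Q)) ∈ S := by
      rintro ⟨h, β, hβ⟩
      rw [hS]
      intro q
      have h1 : toOut H (MulAut.conj h) = 1 := by
        change (QuotientGroup.mk' _ : MulAut H →* MulAut H ⧸ (MulAut.conj : H →* MulAut H).range) (MulAut.conj h) = 1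
        rw [← MonoidHom.mem_ker, QuotientGroup.ker_mk']
        exact ⟨h, rfl⟩
      simp [h1, (hA β).mp hβ q]
    let f : H × ↥AΦ →* ↥S :=
      MonoidHom.codRestrict ((MulAut.conj).prodMap AΦ.subtype) S hfmem
    refine solvable_of_ker_le_range f g ?_
    rintro ⟨⟨α, β⟩, hp⟩ hk
    have hα : toOut H α = 1 := congrArg Subtype.val hk
    have hα' : α ∈ (MulAut.conj : H →* MulAut H).range := by
      change (QuotientGroup.mk' _ : MulAut H →* MulAut H ⧸ (MulAut.conj : H →* MulAut H).range) α = 1 at hα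
      rwa [← MonoidHom.mem_ker, QuotientGroup.ker_mk'] at hα
    obtain ⟨h, rfl⟩ := hα'
    have hβ : β ∈ AΦ := by
      rw [hA]
      intro q
      have := (hS _).mp hp q
      rw [hα] at this
      simpa using this
    exact ⟨(h, ⟨β, hβ⟩), rfl⟩
  · intro hs
    haveI : Group.IsSolvable ↥S := hs
    refine ⟨?_, ?_, ?_⟩
    · -- H solvable
      have hmem : ∀ h : H, ((MulAut.conj h : MulAut H), (1 : MulAut Q)) ∈ S := by
        intro h
        rw [hS]
        intro q
        have h1 : toOut H (MulAut.conj h) = 1 := by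
          change (QuotientGroup.mk' _ : MulAut H →* MulAut H ⧸ (MulAut.conj : H →* MulAut H).range) (MulAut.conj h) = 1
          rw [← MonoidHom.mem_ker, QuotientGroup.ker_mk']
          exact ⟨h, rfl⟩
        simp [h1]
      let g : H →* ↥S :=
        MonoidHom.codRestrict ((MulAut.conj).prodMap (1 : H →* MulAut Q) |>.comp
          (MonoidHom.prod (MonoidHom.id H) (MonoidHom.id H)))
          S (fun h => hmem h)
      haveI : Group.IsSolvable ↥(Subgroup.center H) :=
        Group.isSolvable_of_comm (fun a b => Subtype.ext (Subgroup.mem_center_iff.mp b.2 a))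
      refine solvable_of_ker_le_range (Subgroup.center H).subtype g ?_
      intro h hk
      have : MulAut.conj h = 1 := by
        have := congrArg Subtype.val hk
        exact congrArg Prod.fst this
      have hz : h ∈ Subgroup.center H := by
        rw [Subgroup.mem_center_iff]
        intro x
        have := congrArg (fun (e : MulAut H) => e x) this
        simp only [MulAut.conj_apply, MulAut.one_apply] at this
        have hx : h * x = x * h := by
          calc h * x = (h * x * h⁻¹) * h := by group
          _ = x * h := by rw [this]
        exact hx.symm
      exact ⟨⟨h, hz⟩, rfl⟩
    · -- AΦ solvable
      have hmem : ∀ β : ↥AΦ, ((1 : MulAut H), (β : MulAut Q)) ∈ S := by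
        rintro ⟨β, hβ⟩
        rw [hS]
        intro q
        simp [(hA β).mp hβ q]
      let j : ↥AΦ →* ↥S :=
        MonoidHom.codRestrict ((MonoidHom.inr (MulAut H) (MulAut Q)).comp AΦ.subtype) S hmem
      have hinj : Function.Injective j := by
        intro a b hab
        have := congrArg (fun p : ↥S => (p : MulAut H × MulAut Q).2) hab
        exact Subtype.ext this
      exact solvable_of_solvable_injective hinj
    · -- centralizer solvable
      let g3 : ↥S →* MulAut Q := (MonoidHom.snd _ _).comp S.subtype
      have hKsolv : Group.IsSolvable ↥g3.ker := inferInstance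
      have hmem : ∀ p : ↥g3.ker, toOut H ((p : ↥S) : MulAut H × MulAut Q).1 ∈
          Subgroup.centralizer (Φ.range : Set (OutGroup H)) := by
        rintro ⟨⟨⟨α, β⟩, hp⟩, hk⟩
        have hβ : β = 1 := hk
        rw [Subgroup.mem_centralizer_iff]
        rintro x ⟨q, rfl⟩
        have := (hS (α, β)).mp hp q
        rw [hβ] at this
        simp only [MulAut.one_apply] at this
        calc Φ q * toOut H α = (toOut H α * Φ q * (toOut H α)⁻¹) * toOut H α := by
              rw [← this]
        _ = toOut H α * Φ q := by group
      let φ : ↥g3.ker →* ↥(Subgroup.centralizer (Φ.range : Set (OutGroup H))) :=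
        MonoidHom.codRestrict ((toOut H).comp ((MonoidHom.fst _ _).comp
          (S.subtype.comp g3.ker.subtype))) _ hmem
      have hsurj : Function.Surjective φ := by
        rintro ⟨c, hc⟩
        obtain ⟨α, rfl⟩ := QuotientGroup.mk'_surjective _ c
        have hmemS : ((α : MulAut H), (1 : MulAut Q)) ∈ S := by
          rw [hS]
          intro q
          simp only [MulAut.one_apply]
          have hthis : Φ q * toOut H α = toOut H α * Φ q :=
            Subgroup.mem_centralizer_iff.mp hc (Φ q) ⟨q, rfl⟩
          calc Φ q = (Φ q * toOut H α) * (toOut H α)⁻¹ := by group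
          _ = toOut H α * Φ q * (toOut H α)⁻¹ := by rw [hthis]
        refine ⟨⟨⟨(α, 1), hmemS⟩, rfl⟩, rfl⟩
      exact solvable_of_surjective hsurj
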